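/- Define, for Ξ ≥ 1, r₊ > 0, q, ℓ > 0, n ≥ 3, a, and V > 0: m = r₊ⁿ/ℓ² + q²/r₊^{n−2}, M = (V/16π)·m·(nΞ² − 1), S = (ΞV/4)·r₊^{n−1}, J = (V/16π)·nΞ·m·a (single rotation parameter, with Ξ² = 1 + a²/ℓ²), Q = (ΞV/4π)·√((n−1)(n−2)/2)·q, T = (n r₊^{2n−2} − (n−2)q²ℓ²)/(4πℓ²Ξ r₊^{2n−3}), Ω = a/(Ξℓ²), Φ = √((n−1)/(2(n−2)))·q/(Ξ r₊^{n−2}). Then the differential first law dM = T dS + Ω dJ + Φ dQ holds: regarding M, S, J, Q as smooth functions of the parameters (r₊, a, q), the 1-form dM − T dS − Ω dJ − Φ dQ vanishes identically. -/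

import Mathlib

noncomputable def Xi (ℓ a : ℝ) : ℝ := Real.sqrt (1 + a ^ 2 / ℓ ^ 2)

noncomputable def mMass (n : ℕ) (ℓ r q : ℝ) : ℝ := r ^ n / ℓ ^ 2 + q ^ 2 / r ^ (n - 2)

noncomputable def Mmass (n : ℕ) (ℓ V r a q : ℝ) : ℝ :=
  V / (16 * Real.pi) * mMass n ℓ r q * ((n : ℝ) * (Xi ℓ a) ^ 2 - 1)

noncomputable def Sent (n : ℕ) (ℓ V r a : ℝ) : ℝ := Xi ℓ a * V / 4 * r ^ (n - 1)

noncomputable def Jang (n : ℕ) (ℓ V r a q : ℝ) : ℝ :=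
  V / (16 * Real.pi) * (n : ℝ) * Xi ℓ a * mMass n ℓ r q * a

noncomputable def Qch (n : ℕ) (ℓ V a q : ℝ) : ℝ :=
  Xi ℓ a * V / (4 * Real.pi) * Real.sqrt (((n : ℝ) - 1) * ((n : ℝ) - 2) / 2) * q

noncomputable def Temp (n : ℕ) (ℓ r a q : ℝ) : ℝ :=
  ((n : ℝ) * r ^ (2 * n - 2) - ((n : ℝ) - 2) * q ^ 2 * ℓ ^ 2) /
    (4 * Real.pi * ℓ ^ 2 * Xi ℓ a * r ^ (2 * n - 3))

noncomputable def Omg (ℓ a : ℝ) : ℝ := a / (Xi ℓ a * ℓ ^ 2)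

noncomputable def Pot (n : ℕ) (ℓ r a q : ℝ) : ℝ :=
  Real.sqrt (((n : ℝ) - 1) / (2 * ((n : ℝ) - 2))) * q / (Xi ℓ a * r ^ (n - 2))

set_option maxHeartbeats 2000000

/-- the differential first law dM = T dS + Ω dJ + Φ dQ for the
(n+1)-dimensional AAdS charged rotating black brane with one rotation
parameter: regarding M, S, J, Q as smooth functions of the parameters
(r₊, a, q), the 1-form dM − T dS − Ω dJ − Φ dQ vanishes identically, i.e.
the partial derivatives with respect to each of r₊, a, q satisfy the first
law. -/
theorem black_brane_first_law
    (n : ℕ) (hn : 3 ≤ n) (ℓ V rp a q : ℝ)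
    (hℓ : 0 < ℓ) (hV : 0 < V) (hrp : 0 < rp) :
    (deriv (fun r => Mmass n ℓ V r a q) rp =
        Temp n ℓ rp a q * deriv (fun r => Sent n ℓ V r a) rp +
        Omg ℓ a * deriv (fun r => Jang n ℓ V r a q) rp +
        Pot n ℓ rp a q * deriv (fun r => Qch n ℓ V a q) rp) ∧
    (deriv (fun a' => Mmass n ℓ V rp a' q) a =
        Temp n ℓ rp a q * deriv (fun a' => Sent n ℓ V rp a') a +
        Omg ℓ a * deriv (fun a' => Jang n ℓ V rp a' q) a +
        Pot n ℓ rp a q * deriv (fun a' => Qch n ℓ V a' q) a) ∧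
    (deriv (fun q' => Mmass n ℓ V rp a q') q =
        Temp n ℓ rp a q * deriv (fun q' => Sent n ℓ V rp a) q +
        Omg ℓ a * deriv (fun q' => Jang n ℓ V rp a q') q +
        Pot n ℓ rp a q * deriv (fun q' => Qch n ℓ V a q') q) := by

  obtain ⟨k, rfl⟩ : ∃ k, n = k + 3 := ⟨n - 3, by omega⟩
  have hP : (0:ℝ) < 1 + a ^ 2 / ℓ ^ 2 := by positivity
  have hXpos : 0 < Real.sqrt (1 + a ^ 2 / ℓ ^ 2) := Real.sqrt_pos.mpr hP
  have hX2 : Real.sqrt (1 + a ^ 2 / ℓ ^ 2) ^ 2 = 1 + a ^ 2 / ℓ ^ 2 := Real.sq_sqrt hP.le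
  have hk0 : (0:ℝ) ≤ (k:ℝ) := Nat.cast_nonneg k
  simp only [Mmass, mMass, Sent, Jang, Qch, Temp, Omg, Pot, Xi,
    show k+3-2 = k+1 from rfl, show k+3-1 = k+2 from rfl,
    show 2*(k+3)-2 = 2*k+4 from by omega, show 2*(k+3)-3 = 2*k+3 from by omega]
  have hs2pos : 0 < Real.sqrt (((k:ℝ)+3 - 1) / (2 * ((k:ℝ)+3 - 2))) :=
    Real.sqrt_pos.mpr (by apply div_pos <;> nlinarith)
  have hs1 : Real.sqrt (((k:ℝ)+3 - 1) * ((k:ℝ)+3 - 2) / 2)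
      = ((k:ℝ)+2) / 2 / Real.sqrt (((k:ℝ)+3 - 1) / (2 * ((k:ℝ)+3 - 2))) := by
    rw [eq_div_iff hs2pos.ne', mul_comm, ← Real.sqrt_mul (by apply div_nonneg <;> nlinarith),
      show (((k:ℝ)+3 - 1) / (2 * ((k:ℝ)+3 - 2))) * ((((k:ℝ)+3 - 1) * (((k:ℝ)+3 - 2)) / 2))
        = (((k:ℝ)+2)/2)^2 from by
          have hne : ((k:ℝ) + 3 - 2) ≠ 0 := by nlinarith
          field_simp
          ring]
    exact Real.sqrt_sq (by positivity)
  refine ⟨?_, ?_, ?_⟩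
  · -- derivative with respect to r₊
    have hm : HasDerivAt (fun r : ℝ => r ^ (k+3) / ℓ ^ 2 + q ^ 2 / r ^ (k+1))
        ((↑(k+3) * rp ^ (k+2)) / ℓ ^ 2 +
          (0 * rp^(k+1) - q^2 * (↑(k+1) * rp^k)) / (rp^(k+1))^2) rp :=
      ((hasDerivAt_pow (k+3) rp).div_const (ℓ^2)).add
        ((hasDerivAt_const rp (q^2)).div (hasDerivAt_pow (k+1) rp) (pow_ne_zero _ hrp.ne'))
    have hM := (hm.const_mul (V / (16 * Real.pi))).mul_const
      (((k+3:ℕ) : ℝ) * (Real.sqrt (1 + a ^ 2 / ℓ ^ 2)) ^ 2 - 1)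
    have hS := (hasDerivAt_pow (k+2) rp).const_mul (Real.sqrt (1 + a ^ 2 / ℓ ^ 2) * V / 4)
    have hJ := (hm.const_mul
      (V / (16 * Real.pi) * ↑(k+3) * Real.sqrt (1 + a ^ 2 / ℓ ^ 2))).mul_const a
    rw [hM.deriv, hS.deriv, hJ.deriv, deriv_const]
    push_cast
    rw [hX2]
    set X := Real.sqrt (1 + a ^ 2 / ℓ ^ 2) with hXdef
    field_simp
    ring
  · -- derivative with respect to a
    have hg : HasDerivAt (fun a' : ℝ => 1 + a' ^ 2 / ℓ ^ 2) ((↑2 * a ^ 1) / ℓ ^ 2) a :=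
      ((hasDerivAt_pow 2 a).div_const (ℓ^2)).const_add 1
    have hX' : HasDerivAt (fun a' : ℝ => Real.sqrt (1 + a' ^ 2 / ℓ ^ 2))
        ((↑2 * a ^ 1 / ℓ ^ 2) / (2 * Real.sqrt (1 + a ^ 2 / ℓ ^ 2))) a := hg.sqrt hP.ne'
    have hM : HasDerivAt (fun a' : ℝ => V / (16 * Real.pi) * (rp ^ (k + 3) / ℓ ^ 2 + q ^ 2 / rp ^ (k + 1)) *
        ((((k+3:ℕ)):ℝ) * Real.sqrt (1 + a' ^ 2 / ℓ ^ 2) ^ 2 - 1)) _ a :=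
      (((hX'.pow 2).const_mul (((k+3:ℕ)):ℝ)).sub_const 1).const_mul
      (V / (16 * Real.pi) * (rp ^ (k + 3) / ℓ ^ 2 + q ^ 2 / rp ^ (k + 1)))
    have hS := ((hX'.mul_const V).div_const 4).mul_const (rp ^ (k+2))
    have hJ : HasDerivAt (fun a' : ℝ => V / (16 * Real.pi) * (((k+3:ℕ)):ℝ) * Real.sqrt (1 + a' ^ 2 / ℓ ^ 2) *
        (rp ^ (k + 3) / ℓ ^ 2 + q ^ 2 / rp ^ (k + 1)) * a') _ a :=
      ((hX'.const_mul (V / (16 * Real.pi) * (((k+3:ℕ)):ℝ))).mul_const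
      (rp ^ (k + 3) / ℓ ^ 2 + q ^ 2 / rp ^ (k + 1))).mul (hasDerivAt_id' a)
    have hQ := (((hX'.mul_const V).div_const (4 * Real.pi)).mul_const
      (Real.sqrt (((((k+3:ℕ)) : ℝ) - 1) * ((((k+3:ℕ)) : ℝ) - 2) / 2))).mul_const q
    rw [hM.deriv, hS.deriv, hJ.deriv, hQ.deriv]
    push_cast
    rw [hs1]
    set X := Real.sqrt (1 + a ^ 2 / ℓ ^ 2) with hXdef
    set s2 := Real.sqrt (((k:ℝ)+3 - 1) / (2 * ((k:ℝ)+3 - 2))) with hs2def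
    have e3 : X ^ 3 = (1 + a ^ 2 / ℓ ^ 2) * X := by rw [pow_succ, hX2]
    have e4 : X ^ 4 = (1 + a ^ 2 / ℓ ^ 2) ^ 2 := by
      rw [show (4:ℕ)=2*2 from rfl, pow_mul, hX2]
    have e5 : X ^ 5 = (1 + a ^ 2 / ℓ ^ 2) ^ 2 * X := by rw [pow_succ, e4]
    have e7 : X ^ 7 = (1 + a ^ 2 / ℓ ^ 2) ^ 3 * X := by
      rw [show (7:ℕ)=6+1 from rfl, pow_succ, show (6:ℕ)=2*3 from rfl, pow_mul, hX2, mul_comm]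
    field_simp
    ring_nf
    simp only [e7, e5, e4, e3, hX2]
    field_simp
    ring
  · -- derivative with respect to q
    have hm3 : HasDerivAt (fun q' : ℝ => rp ^ (k+3) / ℓ ^ 2 + q' ^ 2 / rp ^ (k+1))
        (((↑2 * q ^ 1) / rp ^ (k+1))) q :=
      ((hasDerivAt_pow 2 q).div_const (rp^(k+1))).const_add (rp ^ (k+3) / ℓ ^ 2)
    have hM := (hm3.const_mul (V / (16 * Real.pi))).mul_const
      (((k+3:ℕ) : ℝ) * (Real.sqrt (1 + a ^ 2 / ℓ ^ 2)) ^ 2 - 1)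
    have hJ := (hm3.const_mul
      (V / (16 * Real.pi) * ↑(k+3) * Real.sqrt (1 + a ^ 2 / ℓ ^ 2))).mul_const a
    have hQ := (hasDerivAt_id' q).const_mul (Real.sqrt (1 + a ^ 2 / ℓ ^ 2) * V / (4 * Real.pi) *
      Real.sqrt (((((k+3:ℕ)) : ℝ) - 1) * ((((k+3:ℕ)) : ℝ) - 2) / 2))
    rw [hM.deriv, hJ.deriv, hQ.deriv, deriv_const]
    push_cast
    rw [hX2, hs1]
    set X := Real.sqrt (1 + a ^ 2 / ℓ ^ 2) with hXdef
    set s2 := Real.sqrt (((k:ℝ)+3 - 1) / (2 * ((k:ℝ)+3 - 2))) with hs2def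
    field_simp
    ring
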